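/- arXiv:1303.7217 — 5 statements merged into one kernel-verified Lean document; each statement's English description precedes it below -/
import Mathlib

section
/- If θ < π/3 and w is a point such that the angle ∠(v,u,w) between vectors (v−u) and (w−u) is at most θ, and ‖u−w‖ ≤ ‖u−v‖, then ‖w−v‖ ≤ ‖u−v‖ − (1 − 2·sin(θ/2))·‖u−w‖. -/
/-- If θ < π/3 and w is a point such that the angle ∠(v,u,w) between
vectors (v−u) and (w−u) is at most θ, and ‖u−w‖ ≤ ‖u−v‖, then
‖w−v‖ ≤ ‖u−v‖ − (1 − 2·sin(θ/2))·‖u−w‖. Points in ℝ^d with Euclidean norm. -/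
theorem stmt0 (d : ℕ) (u v w : EuclideanSpace ℝ (Fin d)) (θ : ℝ)
    (hθ : θ < Real.pi / 3)
    (hang : EuclideanGeometry.angle v u w ≤ θ)
    (hle : ‖u - w‖ ≤ ‖u - v‖) :
    ‖w - v‖ ≤ ‖u - v‖ - (1 - 2 * Real.sin (θ / 2)) * ‖u - w‖ := by
  set x : EuclideanSpace ℝ (Fin d) := v - u with hx
  set y : EuclideanSpace ℝ (Fin d) := w - u with hy
  set α : ℝ := EuclideanGeometry.angle v u w with hα
  have hαeq : α = InnerProductGeometry.angle x y := rfl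
  have hα0 : 0 ≤ α := hαeq ▸ InnerProductGeometry.angle_nonneg x y
  have hαπ : α ≤ Real.pi := hαeq ▸ InnerProductGeometry.angle_le_pi x y
  have hθ0 : (0:ℝ) ≤ θ := le_trans hα0 hang
  have hxn : ‖u - v‖ = ‖x‖ := by rw [hx, norm_sub_rev]
  have hyn : ‖u - w‖ = ‖y‖ := by rw [hy, norm_sub_rev]
  set a : ℝ := ‖x‖ with ha
  set b : ℝ := ‖y‖ with hb
  have hb0 : 0 ≤ b := norm_nonneg y
  have hba : b ≤ a := by rw [hxn, hyn] at hle; exact hle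
  rw [hxn, hyn]
  rcases eq_or_lt_of_le (le_trans hb0 hba) with haz | hapos
  · -- a = 0, hence b = 0
    have haz' : a = 0 := haz.symm
    have hbz : b = 0 := le_antisymm (haz' ▸ hba) hb0
    have hxz : x = 0 := by rwa [ha, norm_eq_zero] at haz'
    have hyz : y = 0 := by rwa [hb, norm_eq_zero] at hbz
    have hwv : w - v = -(x) + y := by rw [hx, hy]; abel
    rw [hwv, hxz, hyz, hbz]
    simpa using haz.le
  · -- main case
    have hinner : (inner ℝ x y : ℝ) = Real.cos α * (a * b) := by
      rw [hαeq, ← InnerProductGeometry.cos_angle_mul_norm_mul_norm]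
    have hsinθ : 0 ≤ Real.sin (θ / 2) := by
      apply Real.sin_nonneg_of_nonneg_of_le_pi (by linarith)
      have := Real.pi_pos; linarith
    -- bound ‖y - (b/a) • x‖ ≤ 2 * b * sin (θ/2)
    have hcos : Real.cos θ ≤ Real.cos α := by
      apply Real.cos_le_cos_of_nonneg_of_le_pi hα0 _ hang
      have := Real.pi_pos; linarith
    have hsq : ‖y - (b/a) • x‖ ^ 2 = 2 * b ^ 2 * (1 - Real.cos α) := by
      rw [← real_inner_self_eq_norm_sq]
      simp only [inner_sub_sub_self, inner_smul_left, inner_smul_right, real_inner_smul_left,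
        real_inner_smul_right, real_inner_self_eq_norm_sq, RCLike.conj_to_real]
      rw [real_inner_comm x y, hinner, ← ha, ← hb]
      field_simp
      ring
    have hkey : ‖y - (b/a) • x‖ ≤ 2 * b * Real.sin (θ / 2) := by
      have h1 : ‖y - (b/a) • x‖ ^ 2 ≤ (2 * b * Real.sin (θ / 2)) ^ 2 := by
        rw [hsq]
        have hs2 : Real.sin (θ/2) ^ 2 = (1 - Real.cos θ) / 2 := by
          have h := Real.sin_sq_eq_half_sub (θ/2)
          rw [show 2*(θ/2) = θ by ring] at h
          rw [h]; ring
        have : (2 * b * Real.sin (θ / 2)) ^ 2 = 2 * b ^ 2 * (1 - Real.cos θ) := by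
          rw [mul_pow, mul_pow, hs2]; ring
        rw [this]
        have hb2 : 0 ≤ b ^ 2 := sq_nonneg b
        nlinarith
      have h2 := Real.sqrt_le_sqrt h1
      rwa [Real.sqrt_sq (norm_nonneg _), Real.sqrt_sq (by positivity)] at h2
    have hdecomp : w - v = (y - (b/a) • x) + ((b/a - 1) • x) := by
      rw [hx, hy]
      have : (b/a - 1) • (v - u) = (b/a) • (v-u) - (v-u) := by
        rw [sub_smul, one_smul]
      rw [this]; abel
    have hlast : ‖(b/a - 1) • x‖ = a - b := by
      rw [norm_smul, Real.norm_eq_abs, ← ha]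
      have hba' : b/a ≤ 1 := (div_le_one hapos).mpr hba
      rw [abs_of_nonpos (by linarith)]
      field_simp
      ring
    calc ‖w - v‖ ≤ ‖y - (b/a) • x‖ + ‖(b/a - 1) • x‖ := by rw [hdecomp]; exact norm_add_le _ _
      _ ≤ 2 * b * Real.sin (θ/2) + (a - b) := by rw [hlast]; linarith
      _ = a - (1 - 2 * Real.sin (θ/2)) * b := by ring
end

section
/- There exists a set of n points V in the plane such that the Yao graph Y(V,F) (for any fixed frame F with small angular span) has total edge weight Θ(n)·ω(EMST(V)), where ω(EMST(V)) is the weight of the Euclidean minimum spanning tree of V. -/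
abbrev Pt2 := EuclideanSpace ℝ (Fin 2)

def cone2 (B : Fin 2 → Pt2) : Set Pt2 :=
  {x | ∃ lam : Fin 2 → ℝ, (∀ i, 0 ≤ lam i) ∧ x = ∑ i, lam i • B i}

def coneAt2 (u : Pt2) (B : Fin 2 → Pt2) : Set Pt2 := {y | y - u ∈ cone2 B}

def yaoEdge2 (V : Finset Pt2) (F : Finset (Fin 2 → Pt2)) (u v : Pt2) : Prop :=
  u ∈ V ∧ v ∈ V ∧ v ≠ u ∧ ∃ B ∈ F, v ∈ coneAt2 u B ∧
    ∀ w ∈ V, w ≠ u → w ∈ coneAt2 u B → ‖v - u‖ ≤ ‖w - u‖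

-- Total weight of the Yao graph `Y(V,F)`.
open Classical in
noncomputable def yaoWeight (V : Finset Pt2) (F : Finset (Fin 2 → Pt2)) : ℝ :=
  ∑ e ∈ (V ×ˢ V).filter (fun e => yaoEdge2 V F e.1 e.2), ‖e.1 - e.2‖

def IsEdgePath2 (E : Pt2 → Pt2 → Prop) (u v : Pt2) (p : List Pt2) : Prop :=
  p.Chain' (fun a b => E a b ∨ E b a) ∧ p.head? = some u ∧ p.getLast? = some v

/-- Weight of a Euclidean minimum spanning tree of `V` (infimum of total lengths of
finite edge sets on `V` connecting every pair of points of `V`). -/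
noncomputable def mstWeight (V : Finset Pt2) : ℝ :=
  sInf {w : ℝ | ∃ E : Finset (Pt2 × Pt2),
    (∀ e ∈ E, e.1 ∈ V ∧ e.2 ∈ V) ∧
    (∀ u ∈ V, ∀ v ∈ V, ∃ p : List Pt2, IsEdgePath2 (fun a b => (a, b) ∈ E) u v p) ∧
    w = ∑ e ∈ E, ‖e.1 - e.2‖}

/-! ### Auxiliary material -/

noncomputable def pt (x y : ℝ) : Pt2 := (WithLp.equiv 2 (Fin 2 → ℝ)).symm ![x, y]
@[simp] lemma pt_apply0 (x y : ℝ) : pt x y 0 = x := rfl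
@[simp] lemma pt_apply1 (x y : ℝ) : pt x y 1 = y := rfl
lemma pt_sub (a b c d : ℝ) : pt a b - pt c d = pt (a-c) (b-d) := by
  ext i; fin_cases i <;> simp [pt]
lemma pt_norm (a b : ℝ) : ‖pt a b‖ = Real.sqrt (a^2+b^2) := by
  simp [EuclideanSpace.norm_eq, Fin.sum_univ_two, sq_abs]
lemma pt_inner (a b c d : ℝ) : (inner ℝ (pt a b) (pt c d) : ℝ) = a*c + b*d := by
  simp [PiLp.inner_apply, Fin.sum_univ_two, RCLike.inner_apply]; ring
lemma pt_inj {a b c d : ℝ} (h : pt a b = pt c d) : a = c ∧ b = d :=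
  ⟨congrArg (fun p : Pt2 => p 0) h, congrArg (fun p : Pt2 => p 1) h⟩
lemma pt_ne {a b c d : ℝ} (h : b ≠ d) : pt a b ≠ pt c d := fun hh => h (pt_inj hh).2
lemma pt_ne_zero (a b : ℝ) (h : b ≠ 0) : pt a b ≠ 0 := fun hh => h (by simpa using congrArg (fun p : Pt2 => p 1) hh)

open InnerProductGeometry in
lemma cone_inner (φ : ℝ) (hφ2 : φ < Real.pi/2) (B : Fin 2 → Pt2)
    (hang : ∀ i j, angle (B i) (B j) ≤ φ)
    (x y : Pt2)
    (lx ly : Fin 2 → ℝ) (hlx : ∀ i, 0 ≤ lx i) (hly : ∀ i, 0 ≤ ly i)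
    (hx : x = ∑ i, lx i • B i) (hy : y = ∑ i, ly i • B i) :
    Real.cos φ * (‖x‖ * ‖y‖) ≤ (inner ℝ x y : ℝ) := by
  have hφpi : φ ≤ Real.pi := by linarith [Real.pi_pos]
  have hφ0 : 0 ≤ φ := le_trans (angle_nonneg _ _) (hang 0 0)
  have hcos0 : 0 < Real.cos φ := Real.cos_pos_of_mem_Ioo ⟨by linarith [Real.pi_pos], hφ2⟩
  have hcos1 : Real.cos φ ≤ 1 := Real.cos_le_one φ
  have hBne : ∀ i, B i ≠ 0 := by
    intro i h
    have := hang i i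
    rw [h, angle_zero_left] at this
    linarith
  have key : ∀ i j, Real.cos φ * (‖B i‖ * ‖B j‖) ≤ (inner ℝ (B i) (B j) : ℝ) := by
    intro i j
    have h1 : Real.cos φ ≤ Real.cos (angle (B i) (B j)) :=
      Real.cos_le_cos_of_nonneg_of_le_pi (angle_nonneg _ _) hφpi (hang i j)
    rw [cos_angle] at h1
    have hp : 0 < ‖B i‖ * ‖B j‖ := mul_pos (norm_pos_iff.mpr (hBne i)) (norm_pos_iff.mpr (hBne j))
    calc Real.cos φ * (‖B i‖ * ‖B j‖) ≤ ((inner ℝ (B i) (B j) : ℝ) / (‖B i‖ * ‖B j‖)) * (‖B i‖ * ‖B j‖) := by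
          apply mul_le_mul_of_nonneg_right h1 hp.le
      _ = (inner ℝ (B i) (B j) : ℝ) := div_mul_cancel₀ _ hp.ne'
  set a := lx 0; set b := lx 1; set c := ly 0; set e := ly 1
  have ha : 0 ≤ a := hlx 0
  have hb : 0 ≤ b := hlx 1
  have hc : 0 ≤ c := hly 0
  have he : 0 ≤ e := hly 1
  have hxn : ‖x‖ ≤ a * ‖B 0‖ + b * ‖B 1‖ := by
    rw [hx, Fin.sum_univ_two]
    calc ‖lx 0 • B 0 + lx 1 • B 1‖ ≤ ‖lx 0 • B 0‖ + ‖lx 1 • B 1‖ := norm_add_le _ _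
      _ = a * ‖B 0‖ + b * ‖B 1‖ := by
          rw [norm_smul, norm_smul, Real.norm_eq_abs, Real.norm_eq_abs, abs_of_nonneg ha, abs_of_nonneg hb]
  have hyn : ‖y‖ ≤ c * ‖B 0‖ + e * ‖B 1‖ := by
    rw [hy, Fin.sum_univ_two]
    calc ‖ly 0 • B 0 + ly 1 • B 1‖ ≤ ‖ly 0 • B 0‖ + ‖ly 1 • B 1‖ := norm_add_le _ _
      _ = c * ‖B 0‖ + e * ‖B 1‖ := by
          rw [norm_smul, norm_smul, Real.norm_eq_abs, Real.norm_eq_abs, abs_of_nonneg hc, abs_of_nonneg he]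
  have hinner : (inner ℝ x y : ℝ) = a * c * (inner ℝ (B 0) (B 0) : ℝ) + a * e * (inner ℝ (B 0) (B 1) : ℝ)
      + b * c * (inner ℝ (B 1) (B 0) : ℝ) + b * e * (inner ℝ (B 1) (B 1) : ℝ) := by
    rw [hx, hy, Fin.sum_univ_two]
    simp [inner_add_add_self, inner_add_left, inner_add_right, real_inner_smul_left, real_inner_smul_right]
    ring
  have h00 : (inner ℝ (B 0) (B 0) : ℝ) = ‖B 0‖^2 := real_inner_self_eq_norm_sq _
  have h11 : (inner ℝ (B 1) (B 1) : ℝ) = ‖B 1‖^2 := real_inner_self_eq_norm_sq _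
  have h01 := key 0 1
  have h10 := key 1 0
  have hn0 : 0 ≤ ‖x‖ := norm_nonneg _
  have hn1 : 0 ≤ ‖y‖ := norm_nonneg _
  have hB0 : 0 ≤ ‖B 0‖ := norm_nonneg _
  have hB1 : 0 ≤ ‖B 1‖ := norm_nonneg _
  have e1 : Real.cos φ * (‖x‖ * ‖y‖) ≤ Real.cos φ * ((a * ‖B 0‖ + b * ‖B 1‖) * (c * ‖B 0‖ + e * ‖B 1‖)) :=
    mul_le_mul_of_nonneg_left (mul_le_mul hxn hyn hn1 (by positivity)) hcos0.le
  have e2 : a * e * (Real.cos φ * (‖B 0‖ * ‖B 1‖)) ≤ a * e * (inner ℝ (B 0) (B 1) : ℝ) :=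
    mul_le_mul_of_nonneg_left h01 (mul_nonneg ha he)
  have e3 : b * c * (Real.cos φ * (‖B 1‖ * ‖B 0‖)) ≤ b * c * (inner ℝ (B 1) (B 0) : ℝ) :=
    mul_le_mul_of_nonneg_left h10 (mul_nonneg hb hc)
  have e4 : 0 ≤ a * c * ‖B 0‖^2 * (1 - Real.cos φ) :=
    mul_nonneg (mul_nonneg (mul_nonneg ha hc) (sq_nonneg _)) (by linarith)
  have e5 : 0 ≤ b * e * ‖B 1‖^2 * (1 - Real.cos φ) :=
    mul_nonneg (mul_nonneg (mul_nonneg hb he) (sq_nonneg _)) (by linarith)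
  rw [h00, h11] at hinner
  nlinarith [e1, e2, e3, e4, e5]

lemma path_rev (E : Pt2 → Pt2 → Prop) (u v : Pt2) (p : List Pt2)
    (h : IsEdgePath2 E u v p) : IsEdgePath2 E v u p.reverse := by
  obtain ⟨hc, hh, hl⟩ := h
  refine ⟨?_, ?_, ?_⟩
  · unfold List.Chain' at hc ⊢; rw [List.isChain_reverse]
    exact hc.imp (fun a b hab => hab.symm)
  · rwa [List.head?_reverse]
  · rwa [List.getLast?_reverse]

lemma path_fwd (E : Pt2 → Pt2 → Prop) (f : ℕ → Pt2) (k : ℕ)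
    (hE : ∀ j < k, E (f j) (f (j+1))) :
    ∀ d i, i + d ≤ k → ∃ p, IsEdgePath2 E (f i) (f (i+d)) p := by
  intro d
  induction d with
  | zero => exact fun i _ => ⟨[f i], List.isChain_singleton _, rfl, rfl⟩
  | succ d ih =>
    intro i hik
    obtain ⟨p, hc, hh, hl⟩ := ih i (by omega)
    refine ⟨p ++ [f (i+d+1)], ?_, ?_, ?_⟩
    · unfold List.Chain' at hc ⊢; rw [List.isChain_append]
      refine ⟨hc, List.isChain_singleton _, ?_⟩
      intro x hx y hy
      simp only [List.head?_cons, Option.mem_def, Option.some_inj] at hy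
      rw [hl] at hx
      simp only [Option.mem_def, Option.some_inj] at hx
      subst hx; subst hy
      exact Or.inl (hE (i+d) (by omega))
    · rw [List.head?_append_of_ne_nil]
      · exact hh
      · intro h; subst h; simp at hh
    · rw [List.getLast?_append_of_ne_nil _ (by simp)]
      simp only [List.getLast?_singleton, Option.some_inj]
      ring_nf

lemma path_any (E : Pt2 → Pt2 → Prop) (f : ℕ → Pt2) (k : ℕ)
    (hE : ∀ j < k, E (f j) (f (j+1))) :
    ∀ i ≤ k, ∀ j ≤ k, ∃ p, IsEdgePath2 E (f i) (f j) p := by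
  intro i hi j hj
  rcases le_total i j with h | h
  · obtain ⟨p, hp⟩ := path_fwd E f k hE (j - i) i (by omega)
    rw [show i + (j - i) = j by omega] at hp
    exact ⟨p, hp⟩
  · obtain ⟨p, hp⟩ := path_fwd E f k hE (i - j) j (by omega)
    rw [show j + (i - j) = i by omega] at hp
    exact ⟨p.reverse, path_rev E _ _ p hp⟩

set_option maxHeartbeats 2000000 in
/-- there are n-point planar sets whose Yao graph (for any frame of small
angular span covering the plane) has total edge weight Θ(n)·ω(EMST). -/
theorem stmt3 :
    ∃ c : ℝ, 0 < c ∧ ∀ φ : ℝ, 0 < φ → φ < Real.pi / 3 → ∀ n₀ : ℕ, ∃ n ≥ n₀,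
      ∃ V : Finset Pt2, V.card = n ∧
        ∀ F : Finset (Fin 2 → Pt2),
          (∀ x : Pt2, x ≠ 0 → ∃ B ∈ F, x ∈ cone2 B) →
          (∀ B ∈ F, ∀ i j, InnerProductGeometry.angle (B i) (B j) ≤ φ) →
          c * n * mstWeight V ≤ yaoWeight V F := by
  classical
  refine ⟨1/3, by norm_num, ?_⟩
  intro φ hφ0 hφ3 n₀
  obtain ⟨m, hmn₀, hm2⟩ : ∃ m : ℕ, n₀ ≤ m ∧ 2 ≤ m :=
    ⟨max n₀ 2, le_max_left _ _, le_max_right _ _⟩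
  obtain ⟨k, hmk⟩ : ∃ k, m = k + 1 := ⟨m - 1, by omega⟩
  have hk1 : 1 ≤ k := by omega
  have hk0r : (0:ℝ) < k := by exact_mod_cast (by omega : 0 < k)
  set ε : ℝ := 1 / (2 * k) with hε
  have hε0 : 0 < ε := by rw [hε]; apply div_pos one_pos; linarith
  have hkε : (k : ℝ) * ε = 1/2 := by
    rw [hε]
    field_simp
  set t : Pt2 := pt 0 1 with ht
  set b : ℕ → Pt2 := fun i => pt (i * ε) 0 with hb
  have hbinj : Function.Injective b := by
    intro i j hij
    have h1 := (pt_inj hij).1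
    have h2 : (i : ℝ) = j := mul_right_cancel₀ hε0.ne' h1
    exact_mod_cast h2
  have hπ : 0 < Real.pi := Real.pi_pos
  have hφhalf : φ < Real.pi / 2 := by linarith
  have hcosφ : 1/2 < Real.cos φ := by
    have h := Real.cos_lt_cos_of_nonneg_of_le_pi (le_of_lt hφ0) (by linarith) hφ3
    rw [Real.cos_pi_div_three] at h
    linarith
  have htb : ∀ i : ℕ, t ≠ b i := fun i => pt_ne (by norm_num)
  set V : Finset Pt2 := (Finset.range k).image b ∪ {t} with hV
  have hbV : ∀ i < k, b i ∈ V := fun i hi =>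
    Finset.mem_union_left _ (Finset.mem_image_of_mem b (Finset.mem_range.mpr hi))
  have htV : t ∈ V := Finset.mem_union_right _ (Finset.mem_singleton_self t)
  have hVmem : ∀ u ∈ V, u = t ∨ ∃ i < k, u = b i := by
    intro u hu
    rw [hV, Finset.mem_union, Finset.mem_image, Finset.mem_singleton] at hu
    rcases hu with ⟨i, hi, rfl⟩ | h
    · exact Or.inr ⟨i, Finset.mem_range.mp hi, rfl⟩
    · exact Or.inl h
  have hcard : V.card = m := by
    rw [hV, Finset.card_union_of_disjoint, Finset.card_image_of_injective _ hbinj,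
      Finset.card_range, Finset.card_singleton]
    · omega
    · simp only [Finset.disjoint_singleton_right, Finset.mem_image, Finset.mem_range, not_exists]
      rintro i ⟨_, h⟩
      exact htb i h.symm
  refine ⟨m, hmn₀, V, hcard, ?_⟩
  intro F hcover hang
  -- each bottom point has a Yao edge to the top point
  have hyao : ∀ i < k, yaoEdge2 V F (b i) t := by
    intro i hi
    have hxne : t - b i ≠ 0 := by
      rw [ht, hb]
      simp only
      rw [pt_sub]
      exact pt_ne_zero _ _ (by norm_num)
    obtain ⟨B, hBF, hBc⟩ := hcover (t - b i) hxne
    refine ⟨hbV i hi, htV, htb i, B, hBF, hBc, ?_⟩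
    intro w hw hwne hwc
    rcases hVmem w hw with rfl | ⟨j, hj, rfl⟩
    · exact le_refl _
    · exfalso
      have hji : j ≠ i := fun h => hwne (by rw [h])
      obtain ⟨lx, hlx, hxeq⟩ := hBc
      obtain ⟨ly, hly, hyeq⟩ := hwc
      have hkey := cone_inner φ hφhalf B (hang B hBF) _ _ lx ly hlx hly hxeq hyeq
      have hxval : t - b i = pt (-((i:ℝ)*ε)) 1 := by
        rw [ht, hb]; simp only; rw [pt_sub]; norm_num
      set z : ℝ := (j:ℝ) - i with hz
      have hzne : z ≠ 0 := by
        rw [hz]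
        exact sub_ne_zero.mpr (fun h => hji (by exact_mod_cast h))
      have hyval : b j - b i = pt (z*ε) 0 := by
        rw [hb]; simp only; rw [pt_sub, hz]; norm_num; ring_nf
      have hinner2 : (inner ℝ (t - b i) (b j - b i) : ℝ) = -((i:ℝ)*ε) * (z*ε) := by
        rw [hxval, hyval, pt_inner]; ring
      have hnx : 1 ≤ ‖t - b i‖ := by
        rw [hxval, pt_norm]
        rw [show (-((i:ℝ)*ε))^2 + 1^2 = ((i:ℝ)*ε)^2 + 1 by ring]
        calc (1:ℝ) = Real.sqrt 1 := Real.sqrt_one.symm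
          _ ≤ _ := Real.sqrt_le_sqrt (by nlinarith)
      have hny : ‖b j - b i‖ = |z| * ε := by
        rw [hyval, pt_norm]
        rw [show (z*ε)^2 + 0^2 = (z*ε)^2 by ring, Real.sqrt_sq_eq_abs, abs_mul, abs_of_pos hε0]
      have hiε : (i:ℝ) * ε < 1/2 := by
        have h1 : (i:ℝ) + 1 ≤ (k:ℝ) := by exact_mod_cast hi
        nlinarith
      have hzpos : 0 < |z| := abs_pos.mpr hzne
      have hI : (inner ℝ (t - b i) (b j - b i) : ℝ) ≤ ((i:ℝ)*ε) * (|z| * ε) := by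
        rw [hinner2]
        have h1 := neg_abs_le z
        nlinarith [mul_nonneg (mul_nonneg (Nat.cast_nonneg i : (0:ℝ) ≤ i) hε0.le) hε0.le]
      have hprod : ((i:ℝ)*ε) * (|z| * ε) < (1/2) * (|z| * ε) :=
        mul_lt_mul_of_pos_right hiε (by positivity)
      have hR : (1/2) * (|z| * ε) < Real.cos φ * (‖t - b i‖ * ‖b j - b i‖) := by
        rw [hny]
        have h1 : (1/2) * (|z| * ε) < Real.cos φ * (|z| * ε) :=
          mul_lt_mul_of_pos_right hcosφ (by positivity)
        have h2 : Real.cos φ * (|z| * ε) ≤ Real.cos φ * (‖t - b i‖ * (|z| * ε)) := by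
          have : (|z| * ε) ≤ ‖t - b i‖ * (|z| * ε) := le_mul_of_one_le_left (by positivity) hnx
          exact mul_le_mul_of_nonneg_left this (by linarith)
        linarith
      linarith [hkey]
  -- yao weight lower bound
  have hyaoW : (k:ℝ) ≤ yaoWeight V F := by
    rw [yaoWeight]
    have hone : ∀ i : ℕ, (1:ℝ) ≤ ‖b i - t‖ := by
      intro i
      rw [hb, ht]; simp only; rw [pt_sub, pt_norm]
      rw [show ((i:ℝ)*ε - 0)^2 + (0-1)^2 = ((i:ℝ)*ε)^2 + 1 by ring]
      calc (1:ℝ) = Real.sqrt 1 := Real.sqrt_one.symm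
        _ ≤ _ := Real.sqrt_le_sqrt (by nlinarith [sq_nonneg ((i:ℝ)*ε)])
    have hsub : (Finset.range k).image (fun i => (b i, t)) ⊆
        (V ×ˢ V).filter (fun e => yaoEdge2 V F e.1 e.2) := by
      intro e he
      simp only [Finset.mem_image, Finset.mem_range] at he
      obtain ⟨i, hi, rfl⟩ := he
      rw [Finset.mem_filter, Finset.mem_product]
      exact ⟨⟨hbV i hi, htV⟩, hyao i hi⟩
    calc (k:ℝ) = ∑ _i ∈ Finset.range k, (1:ℝ) := by simp
      _ ≤ ∑ i ∈ Finset.range k, ‖b i - t‖ := Finset.sum_le_sum (fun i _ => hone i)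
      _ = ∑ e ∈ (Finset.range k).image (fun i => (b i, t)), ‖e.1 - e.2‖ := by
          rw [Finset.sum_image]
          intro x _ y _ h
          exact hbinj (congrArg Prod.fst h)
      _ ≤ _ := Finset.sum_le_sum_of_subset_of_nonneg hsub (fun _ _ _ => norm_nonneg _)
  -- mst upper bound
  have hmst : mstWeight V ≤ 3/2 := by
    set E : Finset (Pt2 × Pt2) :=
      ((Finset.range (k-1)).image (fun i => (b i, b (i+1)))) ∪ {(t, b 0)} with hEdef
    have hdisj : Disjoint ((Finset.range (k-1)).image (fun i => (b i, b (i+1)))) ({(t, b 0)} : Finset (Pt2 × Pt2)) := by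
      simp only [Finset.disjoint_singleton_right, Finset.mem_image, Finset.mem_range, not_exists]
      rintro i ⟨_, h⟩
      exact htb i (congrArg Prod.fst h).symm
    have hends : ∀ e ∈ E, e.1 ∈ V ∧ e.2 ∈ V := by
      intro e he
      rw [hEdef, Finset.mem_union, Finset.mem_image, Finset.mem_singleton] at he
      rcases he with ⟨i, hi, rfl⟩ | rfl
      · rw [Finset.mem_range] at hi
        exact ⟨hbV i (by omega), hbV (i+1) (by omega)⟩
      · exact ⟨htV, hbV 0 (by omega)⟩
    have hconn : ∀ u ∈ V, ∀ v ∈ V, ∃ p : List Pt2,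
        IsEdgePath2 (fun a c => (a, c) ∈ E) u v p := by
      set f : ℕ → Pt2 := fun j => if j = 0 then t else b (j-1) with hf
      have hEf : ∀ j < k, (f j, f (j+1)) ∈ E := by
        intro j hjk
        rw [hEdef, Finset.mem_union]
        rcases Nat.eq_zero_or_pos j with rfl | hj
        · right; simp [hf]
        · left
          rw [Finset.mem_image]
          refine ⟨j - 1, Finset.mem_range.mpr (by omega), ?_⟩
          simp only [hf]
          rw [if_neg (by omega), if_neg (by omega)]
          have h1 : j - 1 + 1 = j := by omega
          have h2 : j + 1 - 1 = j := by omega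
          rw [h1, h2]
      have hidx : ∀ u ∈ V, ∃ ju ≤ k, u = f ju := by
        intro u hu
        rcases hVmem u hu with rfl | ⟨i, hi, rfl⟩
        · exact ⟨0, by omega, by simp [hf]⟩
        · exact ⟨i + 1, by omega, by simp [hf]⟩
      intro u hu v hv
      obtain ⟨ju, hju, rfl⟩ := hidx u hu
      obtain ⟨jv, hjv, rfl⟩ := hidx v hv
      exact path_any (fun a c => (a, c) ∈ E) f k hEf ju hju jv hjv
    have hW : (∑ e ∈ E, ‖e.1 - e.2‖) ≤ 3/2 := by
      have hstep : ∀ i : ℕ, ‖b i - b (i+1)‖ = ε := by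
        intro i
        rw [hb]; simp only; rw [pt_sub, pt_norm]
        have hcalc : ((i:ℝ)*ε - ((i+1:ℕ):ℝ)*ε)^2 + ((0:ℝ)-0)^2 = ε^2 := by push_cast; ring
        rw [hcalc, Real.sqrt_sq hε0.le]
      have hrung : ‖t - b 0‖ = 1 := by
        rw [ht, hb]; simp only; rw [pt_sub, pt_norm]
        norm_num
      rw [hEdef, Finset.sum_union hdisj, Finset.sum_image
        (by intro x _ y _ h; exact hbinj (congrArg Prod.fst h)), Finset.sum_singleton]
      simp only [hstep, hrung, Finset.sum_const, Finset.card_range, nsmul_eq_mul]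
      have hcast : ((k - 1 : ℕ) : ℝ) ≤ (k : ℝ) := by exact_mod_cast Nat.sub_le k 1
      nlinarith [mul_le_mul_of_nonneg_right hcast hε0.le]
    have hbdd : BddBelow {w : ℝ | ∃ E' : Finset (Pt2 × Pt2),
        (∀ e ∈ E', e.1 ∈ V ∧ e.2 ∈ V) ∧
        (∀ u ∈ V, ∀ v ∈ V, ∃ p : List Pt2, IsEdgePath2 (fun a c => (a, c) ∈ E') u v p) ∧
        w = ∑ e ∈ E', ‖e.1 - e.2‖} := by
      refine ⟨0, ?_⟩
      rintro w ⟨E', _, _, rfl⟩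
      exact Finset.sum_nonneg (fun _ _ => norm_nonneg _)
    have hmem : (∑ e ∈ E, ‖e.1 - e.2‖) ∈ {w : ℝ | ∃ E' : Finset (Pt2 × Pt2),
        (∀ e ∈ E', e.1 ∈ V ∧ e.2 ∈ V) ∧
        (∀ u ∈ V, ∀ v ∈ V, ∃ p : List Pt2, IsEdgePath2 (fun a c => (a, c) ∈ E') u v p) ∧
        w = ∑ e ∈ E', ‖e.1 - e.2‖} := ⟨E, hends, hconn, rfl⟩
    exact le_trans (csInf_le hbdd hmem) hW
  -- conclude
  have hm1 : (1:ℝ) ≤ (k:ℝ) := by exact_mod_cast hk1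
  have hmcast : (m:ℝ) = (k:ℝ) + 1 := by exact_mod_cast hmk
  calc (1/3:ℝ) * (m:ℕ) * mstWeight V ≤ (1/3) * (m:ℕ) * (3/2) := by
        apply mul_le_mul_of_nonneg_left hmst (by positivity)
    _ ≤ (k:ℝ) := by rw [hmcast]; linarith
    _ ≤ yaoWeight V F := hyaoW
end

section
/- Let t > 1 and θ, ρ₁ satisfy θ < π/3, 1 − 2sin(θ/2) − 2√d/ρ₁ > 0, and (2t√d)/ρ₁ + (1 + 2t√d/ρ₁)(1 + √d/ρ₁)/(1 − 2sin(θ/2) − 2√d/ρ₁) ≤ t. Suppose v, w₁, w₂, ..., w_{2k} are points with, for each i: the angle ∠(v, w_{2i−1}, w_{2i}) ≤ θ; ‖v−w_{2i−1}‖ − ‖v−w_{2i}‖ ≥ (1−2sin(θ/2))‖w_{2i−1}−w_{2i}‖; and ‖v−w_{2i}‖ − ‖v−w_{2i+1}‖ ≥ −(√d/ρ₁)·max(‖w_{2i−1}−w_{2i}‖, ‖w_{2i+1}−w_{2i+2}‖). Then Σ_{i=1}^{k} ‖w_{2i−1}−w_{2i}‖ ≤ (‖v−w₁‖)/(1 −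 2sin(θ/2) − 2√d/ρ₁). -/
/-- Auxiliary telescoping bound for real sequences. -/
lemma chain_aux (k : ℕ) (hk : 1 ≤ k) (c ε : ℝ) (hε : 0 ≤ ε)
    (L a b : ℕ → ℝ) (hLnn : ∀ i, 0 ≤ L i) (hbnn : ∀ i, 0 ≤ b i)
    (hdec : ∀ i ∈ Finset.Icc 1 k, c * L i ≤ a i - b i)
    (hjump : ∀ i ∈ Finset.Icc 1 (k - 1), a (i + 1) - b i ≤ ε * (L i + L (i + 1))) :
    (c - 2 * ε) * ∑ i ∈ Finset.Icc 1 k, L i ≤ a 1 := by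
  -- Step A : sum of the decrease bounds
  have stepA : ∑ i ∈ Finset.Icc 1 k, c * L i ≤ ∑ i ∈ Finset.Icc 1 k, (a i - b i) :=
    Finset.sum_le_sum hdec
  -- Step B : telescoping rearrangement
  have stepB : ∀ m, 1 ≤ m → ∑ i ∈ Finset.Icc 1 m, (a i - b i)
      = a 1 - b m + ∑ i ∈ Finset.Icc 1 (m - 1), (a (i + 1) - b i) := by
    intro m hm
    induction m with
    | zero => omega
    | succ n ih =>
      rcases Nat.eq_or_lt_of_le hm with h1 | h1
      · have hn : n = 0 := by omega
        subst hn; simp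
      · have hn : 1 ≤ n := by omega
        rw [Finset.sum_Icc_succ_top (by omega), ih hn]
        have hsplit : ∑ i ∈ Finset.Icc 1 n, (a (i + 1) - b i)
            = ∑ i ∈ Finset.Icc 1 (n - 1), (a (i + 1) - b i) + (a (n + 1) - b n) := by
          conv_lhs => rw [show n = (n - 1) + 1 by omega,
            Finset.sum_Icc_succ_top (by omega)]
          rw [show (n - 1) + 1 = n by omega]
        rw [show (n + 1) - 1 = n from rfl, hsplit]
        ring
  -- Step C : bound the cross terms
  have stepC : ∑ i ∈ Finset.Icc 1 (k - 1), (a (i + 1) - b i)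
      ≤ ε * ∑ i ∈ Finset.Icc 1 (k - 1), (L i + L (i + 1)) := by
    rw [Finset.mul_sum]
    exact Finset.sum_le_sum hjump
  -- Step D : the cross-term sum is at most twice the full sum
  have shift : ∑ i ∈ Finset.Icc 1 (k - 1), L (i + 1) = ∑ i ∈ Finset.Icc 2 k, L i := by
    rw [show (2 : ℕ) = 1 + 1 from rfl, show k = (k - 1) + 1 by omega,
      ← Finset.map_add_right_Icc, Finset.sum_map]
    simp [addRightEmbedding]
  have sub1 : ∑ i ∈ Finset.Icc 1 (k - 1), L i ≤ ∑ i ∈ Finset.Icc 1 k, L i :=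
    Finset.sum_le_sum_of_subset_of_nonneg
      (Finset.Icc_subset_Icc_right (by omega)) (fun i _ _ => hLnn i)
  have sub2 : ∑ i ∈ Finset.Icc 2 k, L i ≤ ∑ i ∈ Finset.Icc 1 k, L i :=
    Finset.sum_le_sum_of_subset_of_nonneg
      (Finset.Icc_subset_Icc_left (by omega)) (fun i _ _ => hLnn i)
  have stepD : ∑ i ∈ Finset.Icc 1 (k - 1), (L i + L (i + 1))
      ≤ 2 * ∑ i ∈ Finset.Icc 1 k, L i := by
    rw [Finset.sum_add_distrib, shift]
    linarith
  have hmul : ε * ∑ i ∈ Finset.Icc 1 (k - 1), (L i + L (i + 1))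
      ≤ ε * (2 * ∑ i ∈ Finset.Icc 1 k, L i) := by
    exact mul_le_mul_of_nonneg_left stepD hε
  have hmulsum : ∑ i ∈ Finset.Icc 1 k, c * L i = c * ∑ i ∈ Finset.Icc 1 k, L i := by
    rw [Finset.mul_sum]
  have hbk := hbnn k
  nlinarith [stepB k hk]

/-- the telescoping bound on the total length of a chain of near-parallel
crossing edges w₁w₂, w₃w₄, …, w_{2k−1}w_{2k} aimed at the target v. -/
theorem stmt9 (d k : ℕ) (hd : 0 < d) (hk : 1 ≤ k) (t θ ρ₁ : ℝ)
    (ht : 1 < t) (hρ₁ : 0 < ρ₁) (hθ : θ < Real.pi / 3)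
    (hden : 0 < 1 - 2 * Real.sin (θ / 2) - 2 * Real.sqrt d / ρ₁)
    (hbig : 2 * t * Real.sqrt d / ρ₁ +
        (1 + 2 * t * Real.sqrt d / ρ₁) * (1 + Real.sqrt d / ρ₁) /
          (1 - 2 * Real.sin (θ / 2) - 2 * Real.sqrt d / ρ₁) ≤ t)
    (v : EuclideanSpace ℝ (Fin d)) (w : ℕ → EuclideanSpace ℝ (Fin d))
    (hang : ∀ i ∈ Finset.Icc 1 k,
      EuclideanGeometry.angle v (w (2 * i - 1)) (w (2 * i)) ≤ θ)
    (hdec : ∀ i ∈ Finset.Icc 1 k,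
      (1 - 2 * Real.sin (θ / 2)) * ‖w (2 * i - 1) - w (2 * i)‖ ≤
        ‖v - w (2 * i - 1)‖ - ‖v - w (2 * i)‖)
    (hjump : ∀ i ∈ Finset.Icc 1 (k - 1),
      -(Real.sqrt d / ρ₁) *
          max ‖w (2 * i - 1) - w (2 * i)‖ ‖w (2 * i + 1) - w (2 * i + 2)‖ ≤
        ‖v - w (2 * i)‖ - ‖v - w (2 * i + 1)‖) :
    ∑ i ∈ Finset.Icc 1 k, ‖w (2 * i - 1) - w (2 * i)‖ ≤
      ‖v - w 1‖ / (1 - 2 * Real.sin (θ / 2) - 2 * Real.sqrt d / ρ₁) := by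
  set c : ℝ := 1 - 2 * Real.sin (θ / 2) with hc
  set ε : ℝ := Real.sqrt d / ρ₁ with hεdef
  have hεnn : 0 ≤ ε := div_nonneg (Real.sqrt_nonneg _) hρ₁.le
  have key := chain_aux k hk c ε hεnn
      (fun i => ‖w (2 * i - 1) - w (2 * i)‖)
      (fun i => ‖v - w (2 * i - 1)‖)
      (fun i => ‖v - w (2 * i)‖)
      (fun i => norm_nonneg _) (fun i => norm_nonneg _)
      hdec
      (by
        intro i hi
        have e1 : 2 * (i + 1) - 1 = 2 * i + 1 := by omega
        have e2 : 2 * (i + 1) = 2 * i + 2 := by omega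
        have e3 : 2 * i + 2 - 1 = 2 * i + 1 := by omega
        simp only [e2, e3]
        have h := hjump i hi
        have hmax : max ‖w (2 * i - 1) - w (2 * i)‖ ‖w (2 * i + 1) - w (2 * i + 2)‖
            ≤ ‖w (2 * i - 1) - w (2 * i)‖ + ‖w (2 * i + 1) - w (2 * i + 2)‖ :=
          max_le (le_add_of_nonneg_right (norm_nonneg _))
            (le_add_of_nonneg_left (norm_nonneg _))
        nlinarith)
  -- conclude by dividing
  have hden' : 0 < c - 2 * ε := by
    have : 2 * Real.sqrt d / ρ₁ = 2 * ε := by rw [hεdef]; ring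
    rw [hc, hεdef]
    have := hden
    rw [show (2 : ℝ) * Real.sqrt d / ρ₁ = 2 * (Real.sqrt d / ρ₁) by ring] at this
    linarith
  rw [show 1 - 2 * Real.sin (θ / 2) - 2 * Real.sqrt d / ρ₁ = c - 2 * ε by
    rw [hc, hεdef]; ring, le_div_iff₀ hden']
  simp only [show 2 * 1 - 1 = 1 from rfl] at key
  nlinarith
end

section
/- Let F be a frame with each cone of angular span at most α, and let b, b' be boxes with d(b,b') ≥ ρ₁·max(ϑ(b),ϑ(b')). Then there exists a subcollection B ⊆ F of cones such that for every point x ∈ b the union ∪_{B_i∈B} C(x,B_i) contains b', and the angular span of B is at most θ = 4√d/ρ₁ + 3α. -/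
abbrev Pt (d : ℕ) := EuclideanSpace ℝ (Fin d)

/-- The axis-parallel box ∏ᵢ [L i, R i] in ℝ^d. -/
def box {d : ℕ} (L R : Fin d → ℝ) : Set (Pt d) :=
  {x | ∀ i, L i ≤ x i ∧ x i ≤ R i}

/-- The size of the box: its longest side length. -/
noncomputable def boxSize {d : ℕ} (L R : Fin d → ℝ) : ℝ := ⨆ i, (R i - L i)

/-- The minimum Euclidean distance between two sets. -/
noncomputable def setDist {d : ℕ} (A B : Set (Pt d)) : ℝ :=
  sInf ((fun p : Pt d × Pt d => dist p.1 p.2) '' (A ×ˢ B))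

/-- The cone generated by a family of vectors: all nonnegative combinations. -/
def cone {d : ℕ} (B : Fin d → Pt d) : Set (Pt d) :=
  {x | ∃ lam : Fin d → ℝ, (∀ i, 0 ≤ lam i) ∧ x = ∑ i, lam i • B i}

/-- The cone with apex `u` generated by `B`. -/
def coneAt {d : ℕ} (u : Pt d) (B : Fin d → Pt d) : Set (Pt d) :=
  {y | y - u ∈ cone B}



section Helpers

open InnerProductGeometry Real

variable {V : Type*} [NormedAddCommGroup V] [InnerProductSpace ℝ V]

local notation "⟪" x ", " y "⟫" => @inner ℝ V _ x y

lemma unit_angle_triangle (a b c : V) (ha : ‖a‖ = 1) (hb : ‖b‖ = 1) (hc : ‖c‖ = 1) :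
    angle a c ≤ angle a b + angle b c := by
  by_cases hπ : π ≤ angle a b + angle b c
  · exact (angle_le_pi a c).trans hπ
  push_neg at hπ
  have hbb : ⟪b, b⟫ = (1:ℝ) := by
    rw [real_inner_self_eq_norm_sq, hb]; norm_num
  have hexp : ⟪a - ⟪a, b⟫ • b, c - ⟪b, c⟫ • b⟫ = ⟪a, c⟫ - ⟪a, b⟫ * ⟪b, c⟫ := by
    simp only [inner_sub_left, inner_sub_right, real_inner_smul_left, real_inner_smul_right,
      hbb, real_inner_comm b a]
    ring
  have hna : ‖a - ⟪a, b⟫ • b‖ = Real.sqrt (1 - ⟪a, b⟫ ^ 2) := by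
    have h2 : ‖a - ⟪a, b⟫ • b‖ ^ 2 = 1 - ⟪a, b⟫ ^ 2 := by
      rw [norm_sub_sq_real, real_inner_smul_right, norm_smul, ha]
      simp [hb, sq_abs]; ring
    rw [← h2, Real.sqrt_sq (norm_nonneg _)]
  have hnc : ‖c - ⟪b, c⟫ • b‖ = Real.sqrt (1 - ⟪b, c⟫ ^ 2) := by
    have h2 : ‖c - ⟪b, c⟫ • b‖ ^ 2 = 1 - ⟪b, c⟫ ^ 2 := by
      rw [norm_sub_sq_real, real_inner_smul_right, norm_smul, hc, real_inner_comm c b]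
      simp [hb, sq_abs]; ring
    rw [← h2, Real.sqrt_sq (norm_nonneg _)]
  have hkey : ⟪a, b⟫ * ⟪b, c⟫ - Real.sqrt (1 - ⟪a, b⟫ ^ 2) * Real.sqrt (1 - ⟪b, c⟫ ^ 2)
      ≤ ⟪a, c⟫ := by
    have h := abs_real_inner_le_norm (a - ⟪a, b⟫ • b) (c - ⟪b, c⟫ • b)
    rw [hexp, hna, hnc] at h
    have := neg_le_of_abs_le h
    linarith
  have hcos1 : Real.cos (angle a b) = ⟪a, b⟫ := by rw [cos_angle, ha, hb]; simp
  have hcos2 : Real.cos (angle b c) = ⟪b, c⟫ := by rw [cos_angle, hb, hc]; simp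
  have hsin1 : Real.sin (angle a b) = Real.sqrt (1 - ⟪a, b⟫ ^ 2) := by
    have h := sin_angle_mul_norm_mul_norm a b
    rw [ha, hb] at h
    simpa [real_inner_self_eq_norm_sq, ha, hb, sq] using h
  have hsin2 : Real.sin (angle b c) = Real.sqrt (1 - ⟪b, c⟫ ^ 2) := by
    have h := sin_angle_mul_norm_mul_norm b c
    rw [hb, hc] at h
    simpa [real_inner_self_eq_norm_sq, hb, hc, sq] using h
  have hcosac : Real.cos (angle a c) = ⟪a, c⟫ := by rw [cos_angle, ha, hc]; simp
  have hcossum : Real.cos (angle a b + angle b c) ≤ Real.cos (angle a c) := by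
    rw [Real.cos_add, hcos1, hcos2, hsin1, hsin2, hcosac]; exact hkey
  by_contra h
  push_neg at h
  have := Real.strictAntiOn_cos
      ⟨add_nonneg (angle_nonneg a b) (angle_nonneg b c), hπ.le⟩
      ⟨angle_nonneg a c, angle_le_pi a c⟩ h
  linarith

lemma norm_inv_smul (x : V) (hx : x ≠ 0) : ‖(‖x‖⁻¹ • x)‖ = 1 := by
  rw [norm_smul, norm_inv, norm_norm, inv_mul_cancel₀ (norm_ne_zero_iff.2 hx)]

lemma angle_normalize (x y : V) (hx : x ≠ 0) (hy : y ≠ 0) :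
    angle (‖x‖⁻¹ • x) (‖y‖⁻¹ • y) = angle x y := by
  rw [angle_smul_left_of_pos _ _ (inv_pos.2 (norm_pos_iff.2 hx)),
    angle_smul_right_of_pos _ _ (inv_pos.2 (norm_pos_iff.2 hy))]

lemma angle_triangle' (x y z : V) (hx : x ≠ 0) (hy : y ≠ 0) (hz : z ≠ 0) :
    angle x z ≤ angle x y + angle y z := by
  rw [← angle_normalize x z hx hz, ← angle_normalize x y hx hy, ← angle_normalize y z hy hz]
  exact unit_angle_triangle _ _ _ (norm_inv_smul x hx) (norm_inv_smul y hy) (norm_inv_smul z hz)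

-- Jordan: angle ≤ (π/2) * chord for unit vectors
lemma angle_le_chord (a b : V) (ha : ‖a‖ = 1) (hb : ‖b‖ = 1) :
    angle a b ≤ π / 2 * ‖a - b‖ := by
  have hchord : ‖a - b‖ = 2 * Real.sin (angle a b / 2) := by
    have hcos : Real.cos (angle a b) = ⟪a, b⟫ := by rw [cos_angle, ha, hb]; simp
    have h2 : ‖a - b‖ ^ 2 = 2 - 2 * Real.cos (angle a b) := by
      rw [norm_sub_sq_real, ha, hb, hcos]; ring
    have hsq : (2 * Real.sin (angle a b / 2)) ^ 2 = 2 - 2 * Real.cos (angle a b) := by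
      have := Real.sin_sq_eq_half_sub (angle a b / 2)
      rw [show 2 * (angle a b / 2) = angle a b by ring] at this
      nlinarith
    have hs : 0 ≤ Real.sin (angle a b / 2) :=
      Real.sin_nonneg_of_nonneg_of_le_pi (by linarith [angle_nonneg a b])
        (by linarith [angle_le_pi a b, Real.pi_pos])
    nlinarith [norm_nonneg (a - b), sq_nonneg (‖a - b‖ - 2 * Real.sin (angle a b / 2))]
  rw [hchord]
  have hj : 2 / π * (angle a b / 2) ≤ Real.sin (angle a b / 2) :=
    Real.mul_le_sin (by linarith [angle_nonneg a b]) (by linarith [angle_le_pi a b])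
  have hπ : (0:ℝ) < π := Real.pi_pos
  have : angle a b / π ≤ Real.sin (angle a b / 2) := by
    rw [div_eq_mul_inv]
    calc angle a b * π⁻¹ = 2 / π * (angle a b / 2) := by field_simp
    _ ≤ _ := hj
  calc angle a b = π / 2 * (2 * (angle a b / π)) := by field_simp
  _ ≤ π / 2 * (2 * Real.sin (angle a b / 2)) := by
      apply mul_le_mul_of_nonneg_left _ (by positivity)
      linarith
-- chord of normalized ≤ ‖u - v‖ / min norm
lemma chord_le (u v : V) (hu : u ≠ 0) (hv : v ≠ 0) (hvu : ‖v‖ ≤ ‖u‖) :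
    ‖v‖ * ‖‖u‖⁻¹ • u - ‖v‖⁻¹ • v‖ ≤ ‖u - v‖ := by
  have hun : (0:ℝ) < ‖u‖ := norm_pos_iff.2 hu
  have hvn : (0:ℝ) < ‖v‖ := norm_pos_iff.2 hv
  have hinner : ⟪u, v⟫ ≤ ‖u‖ * ‖v‖ := real_inner_le_norm u v
  have hsq : (‖v‖ * ‖‖u‖⁻¹ • u - ‖v‖⁻¹ • v‖) ^ 2 ≤ ‖u - v‖ ^ 2 := by
    rw [mul_pow, norm_sub_sq_real, norm_sub_sq_real, norm_inv_smul u hu, norm_inv_smul v hv,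
      real_inner_smul_left, real_inner_smul_right]
    have expand : ‖v‖^2 * (1^2 - 2 * (‖u‖⁻¹ * (‖v‖⁻¹ * ⟪u,v⟫)) + 1^2)
        = 2*‖v‖^2 - 2 * (‖v‖/‖u‖) * ⟪u,v⟫ := by
      field_simp; ring
    rw [expand, ← mul_le_mul_iff_left₀ hun]
    have hre : (2 * ‖v‖ ^ 2 - 2 * (‖v‖ / ‖u‖) * ⟪u,v⟫) * ‖u‖
        = 2 * ‖v‖ ^ 2 * ‖u‖ - 2 * ‖v‖ * ⟪u,v⟫ := by field_simp
    rw [hre]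
    nlinarith [mul_nonneg (sub_nonneg.2 hvu) (mul_nonneg hun.le (sub_nonneg.2 hvu)),
      mul_nonneg (sub_nonneg.2 hvu) (sub_nonneg.2 hinner)]
  have h1 : 0 ≤ ‖v‖ * ‖‖u‖⁻¹ • u - ‖v‖⁻¹ • v‖ := by positivity
  nlinarith [norm_nonneg (u - v)]

lemma angle_le_of_norm_sub (u v : V) (hu : u ≠ 0) (hv : v ≠ 0) {m : ℝ} (hm : 0 < m)
    (hmu : m ≤ ‖u‖) (hmv : m ≤ ‖v‖) :
    angle u v ≤ π / 2 * (‖u - v‖ / m) := by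
  wlog hvu : ‖v‖ ≤ ‖u‖ generalizing u v
  · rw [angle_comm, norm_sub_rev]; exact this v u hv hu hmv hmu (le_of_not_ge hvu)
  have hvn : (0:ℝ) < ‖v‖ := norm_pos_iff.2 hv
  have h1 : angle u v ≤ π / 2 * ‖‖u‖⁻¹ • u - ‖v‖⁻¹ • v‖ := by
    rw [← angle_normalize u v hu hv]
    exact angle_le_chord _ _ (norm_inv_smul u hu) (norm_inv_smul v hv)
  have h2 : ‖‖u‖⁻¹ • u - ‖v‖⁻¹ • v‖ ≤ ‖u - v‖ / m := by
    rw [le_div_iff₀ hm]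
    calc ‖‖u‖⁻¹ • u - ‖v‖⁻¹ • v‖ * m ≤ ‖‖u‖⁻¹ • u - ‖v‖⁻¹ • v‖ * ‖v‖ := by
          exact mul_le_mul_of_nonneg_left hmv (norm_nonneg _)
    _ = ‖v‖ * ‖‖u‖⁻¹ • u - ‖v‖⁻¹ • v‖ := mul_comm _ _
    _ ≤ ‖u - v‖ := chord_le u v hu hv hvu
  calc angle u v ≤ π / 2 * ‖‖u‖⁻¹ • u - ‖v‖⁻¹ • v‖ := h1
  _ ≤ π / 2 * (‖u - v‖ / m) := by
      apply mul_le_mul_of_nonneg_left h2 (by positivity)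

end Helpers

lemma side_le_boxSize {d : ℕ} (L R : Fin d → ℝ) (i : Fin d) :
    R i - L i ≤ boxSize L R := by
  exact le_ciSup (f := fun i => R i - L i) (Set.Finite.bddAbove (Set.finite_range _)) i

lemma boxSize_nonneg {d : ℕ} (hd : 0 < d) (L R : Fin d → ℝ) (hb : ∀ i, L i ≤ R i) :
    0 ≤ boxSize L R := by
  have := side_le_boxSize L R ⟨0, hd⟩
  have := hb ⟨0, hd⟩
  linarith

lemma box_nonempty {d : ℕ} (L R : Fin d → ℝ) (hb : ∀ i, L i ≤ R i) :
    ((WithLp.equiv 2 (Fin d → ℝ)).symm L) ∈ box L R := by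
  intro i
  simp [WithLp.equiv_symm_apply, PiLp.toLp_apply, hb i]

lemma box_norm_le {d : ℕ} (L R : Fin d → ℝ) {x y : Pt d} {s : ℝ} (hs : 0 ≤ s)
    (hx : x ∈ box L R) (hy : y ∈ box L R) (hside : ∀ i, R i - L i ≤ s) :
    ‖x - y‖ ≤ Real.sqrt d * s := by
  have h1 : ∀ i, ‖(x - y) i‖ ^ 2 ≤ s ^ 2 := by
    intro i
    have hxi := hx i; have hyi := hy i; have := hside i
    have habs : |x i - y i| ≤ s := abs_sub_le_iff.2 ⟨by linarith, by linarith⟩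
    have : (x - y) i = x i - y i := rfl
    rw [this, Real.norm_eq_abs]
    exact pow_le_pow_left₀ (abs_nonneg _) habs 2
  rw [EuclideanSpace.norm_eq]
  have h2 : ∑ i, ‖(x - y) i‖ ^ 2 ≤ (d : ℝ) * s ^ 2 := by
    calc ∑ i, ‖(x - y) i‖ ^ 2 ≤ ∑ _i : Fin d, s ^ 2 := Finset.sum_le_sum fun i _ => h1 i
    _ = (d : ℝ) * s ^ 2 := by simp [mul_comm]
  calc Real.sqrt (∑ i, ‖(x - y) i‖ ^ 2) ≤ Real.sqrt ((d : ℝ) * s ^ 2) := Real.sqrt_le_sqrt h2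
  _ = Real.sqrt d * s := by
      rw [Real.sqrt_mul (Nat.cast_nonneg d), Real.sqrt_sq hs]

lemma setDist_le_dist {d : ℕ} {A B : Set (Pt d)} {x y : Pt d} (hx : x ∈ A) (hy : y ∈ B) :
    setDist A B ≤ dist x y :=
  csInf_le ⟨0, fun r hr => by
    obtain ⟨p, _, rfl⟩ := hr; exact dist_nonneg⟩ ⟨(x, y), Set.mk_mem_prod hx hy, rfl⟩

lemma setDist_nonneg' {d : ℕ} {A B : Set (Pt d)} (hA : A.Nonempty) (hB : B.Nonempty) :
    0 ≤ setDist A B := by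
  obtain ⟨a, ha⟩ := hA; obtain ⟨b, hbb⟩ := hB
  have hne : ((fun p : Pt d × Pt d => dist p.1 p.2) '' (A ×ˢ B)).Nonempty :=
    ⟨dist a b, ⟨(a,b), Set.mk_mem_prod ha hbb, rfl⟩⟩
  apply le_csInf hne
  rintro r ⟨p, _, rfl⟩; exact dist_nonneg

lemma box_subsingleton {d : ℕ} (L R : Fin d → ℝ) (hb : ∀ i, L i ≤ R i)
    (h0 : boxSize L R ≤ 0) {x y : Pt d} (hx : x ∈ box L R) (hy : y ∈ box L R) : x = y := by
  have hRL : ∀ i, R i = L i := fun i => by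
    have := side_le_boxSize L R i; have := hb i; linarith
  ext i
  have hxi := hx i; have hyi := hy i
  rw [hRL i] at hxi hyi
  have : x i = L i := le_antisymm hxi.2 hxi.1
  have : y i = L i := le_antisymm hyi.2 hyi.1
  simp_all


lemma zero_mem_cone {d : ℕ} (B : Fin d → Pt d) : (0 : Pt d) ∈ cone B :=
  ⟨0, fun _ => le_refl 0, by simp⟩

/-- if each cone of the covering frame F has angular span at most α and
d(b,b') ≥ ρ₁·max(ϑ(b),ϑ(b')), there is a subcollection 𝓑 ⊆ F of cones such that for every
x ∈ b the union of the cones of 𝓑 at x contains b', and the angular span of 𝓑 is at most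
4√d/ρ₁ + 3α. -/
theorem stmt17 (d : ℕ) (hd : 0 < d) (α ρ₁ : ℝ) (hα : 0 ≤ α) (hρ : 0 < ρ₁)
    (F : Finset (Fin d → Pt d))
    (hcover : ∀ x : Pt d, x ≠ 0 → ∃ B ∈ F, x ∈ cone B)
    (hspan : ∀ B ∈ F, ∀ v₁ ∈ cone B, ∀ v₂ ∈ cone B, v₁ ≠ 0 → v₂ ≠ 0 →
      InnerProductGeometry.angle v₁ v₂ ≤ α)
    (L R L' R' : Fin d → ℝ)
    (hb : ∀ i, L i ≤ R i) (hb' : ∀ i, L' i ≤ R' i)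
    (hsep : ρ₁ * max (boxSize L R) (boxSize L' R') ≤
      setDist (box L R) (box L' R')) :
    ∃ 𝓑 ⊆ F,
      (∀ x ∈ box L R, box L' R' ⊆ ⋃ B ∈ (𝓑 : Finset (Fin d → Pt d)), coneAt x B) ∧
      (∀ B₁ ∈ 𝓑, ∀ B₂ ∈ 𝓑, ∀ v₁ ∈ cone B₁, ∀ v₂ ∈ cone B₂, v₁ ≠ 0 → v₂ ≠ 0 →
        InnerProductGeometry.angle v₁ v₂ ≤ 4 * Real.sqrt d / ρ₁ + 3 * α) := by
  classical
  set M : ℝ := max (boxSize L R) (boxSize L' R') with hM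
  set D : ℝ := setDist (box L R) (box L' R') with hD
  have hM1 : 0 ≤ boxSize L R := boxSize_nonneg hd L R hb
  have hM2 : 0 ≤ boxSize L' R' := boxSize_nonneg hd L' R' hb'
  have hMnn : 0 ≤ M := le_trans hM1 (le_max_left _ _)
  have hquot : 0 ≤ 4 * Real.sqrt d / ρ₁ := by positivity
  by_cases hDpos : 0 < D
  · -- main case: boxes are separated
    set 𝓑 : Finset (Fin d → Pt d) :=
      F.filter (fun B => ∃ x ∈ box L R, ∃ y ∈ box L' R', y - x ∈ cone B) with h𝓑
    refine ⟨𝓑, Finset.filter_subset _ _, ?_, ?_⟩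
    · intro x hx y hy
      have hne : y - x ≠ 0 := by
        intro h0
        have hd0 : dist x y = 0 := by rw [dist_comm, dist_eq_norm, h0, norm_zero]
        have hle := setDist_le_dist hx hy
        rw [← hD, hd0] at hle
        linarith
      obtain ⟨B, hBF, hBc⟩ := hcover (y - x) hne
      have hB𝓑 : B ∈ 𝓑 := Finset.mem_filter.2 ⟨hBF, x, hx, y, hy, hBc⟩
      exact Set.mem_biUnion hB𝓑 hBc
    · intro B₁ hB₁ B₂ hB₂ v₁ hv₁ v₂ hv₂ hv₁0 hv₂0
      obtain ⟨hB₁F, x₁, hx₁, y₁, hy₁, hu₁⟩ := Finset.mem_filter.1 hB₁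
      obtain ⟨hB₂F, x₂, hx₂, y₂, hy₂, hu₂⟩ := Finset.mem_filter.1 hB₂
      have hD₁ : D ≤ ‖y₁ - x₁‖ := by
        rw [← dist_eq_norm, dist_comm]; exact setDist_le_dist hx₁ hy₁
      have hD₂ : D ≤ ‖y₂ - x₂‖ := by
        rw [← dist_eq_norm, dist_comm]; exact setDist_le_dist hx₂ hy₂
      have hu₁0 : y₁ - x₁ ≠ 0 := by
        intro h; rw [h, norm_zero] at hD₁; linarith
      have hu₂0 : y₂ - x₂ ≠ 0 := by
        intro h; rw [h, norm_zero] at hD₂; linarith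
      have hdiff : ‖(y₁ - x₁) - (y₂ - x₂)‖ ≤ 2 * Real.sqrt d * M := by
        have h1 : ‖y₁ - y₂‖ ≤ Real.sqrt d * M := by
          apply box_norm_le L' R' hMnn hy₁ hy₂
          intro i; exact le_trans (side_le_boxSize L' R' i)
            (le_trans (le_max_right _ _) (le_refl M))
        have h2 : ‖x₂ - x₁‖ ≤ Real.sqrt d * M := by
          apply box_norm_le L R hMnn hx₂ hx₁
          intro i; exact le_trans (side_le_boxSize L R i) (le_max_left _ _)
        calc ‖(y₁ - x₁) - (y₂ - x₂)‖ = ‖(y₁ - y₂) + (x₂ - x₁)‖ := by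
              rw [show y₁ - x₁ - (y₂ - x₂) = y₁ - y₂ + (x₂ - x₁) by abel]
        _ ≤ ‖y₁ - y₂‖ + ‖x₂ - x₁‖ := norm_add_le _ _
        _ ≤ 2 * Real.sqrt d * M := by linarith
      -- angle between the two witness directions
      have hmid : InnerProductGeometry.angle (y₁ - x₁) (y₂ - x₂) ≤ 4 * Real.sqrt d / ρ₁ := by
        by_cases hMpos : 0 < M
        · have h := angle_le_of_norm_sub (y₁ - x₁) (y₂ - x₂) hu₁0 hu₂0 hDpos hD₁ hD₂
          have hDM : ρ₁ * M ≤ D := hsep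
          have h2 : ‖(y₁ - x₁) - (y₂ - x₂)‖ / D ≤ 2 * Real.sqrt d / ρ₁ := by
            rw [div_le_div_iff₀ hDpos hρ]
            calc ‖(y₁ - x₁) - (y₂ - x₂)‖ * ρ₁ ≤ (2 * Real.sqrt d * M) * ρ₁ :=
              mul_le_mul_of_nonneg_right hdiff hρ.le
            _ = 2 * Real.sqrt d * (ρ₁ * M) := by ring
            _ ≤ 2 * Real.sqrt d * D := by
                apply mul_le_mul_of_nonneg_left hDM (by positivity)
          calc InnerProductGeometry.angle (y₁ - x₁) (y₂ - x₂)
              ≤ Real.pi / 2 * (‖(y₁ - x₁) - (y₂ - x₂)‖ / D) := h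
          _ ≤ Real.pi / 2 * (2 * Real.sqrt d / ρ₁) := by
              apply mul_le_mul_of_nonneg_left h2 (by positivity)
          _ = Real.pi * Real.sqrt d / ρ₁ := by ring
          _ ≤ 4 * Real.sqrt d / ρ₁ := by
              gcongr
              exact Real.pi_le_four
        · have hM0 : M = 0 := le_antisymm (not_lt.1 hMpos) hMnn
          have : ‖(y₁ - x₁) - (y₂ - x₂)‖ ≤ 0 := by
            rw [hM0] at hdiff; simpa using hdiff
          have heq : y₁ - x₁ = y₂ - x₂ := by
            have := le_antisymm this (norm_nonneg _)
            rwa [norm_eq_zero, sub_eq_zero] at this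
          rw [heq, InnerProductGeometry.angle_self hu₂0]
          exact hquot
      have h1 : InnerProductGeometry.angle v₁ (y₁ - x₁) ≤ α :=
        hspan B₁ hB₁F v₁ hv₁ (y₁ - x₁) hu₁ hv₁0 hu₁0
      have h2 : InnerProductGeometry.angle (y₂ - x₂) v₂ ≤ α :=
        hspan B₂ hB₂F (y₂ - x₂) hu₂ v₂ hv₂ hu₂0 hv₂0
      have t1 := angle_triangle' v₁ (y₁ - x₁) v₂ hv₁0 hu₁0 hv₂0
      have t2 := angle_triangle' (y₁ - x₁) (y₂ - x₂) v₂ hu₁0 hu₂0 hv₂0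
      linarith
  · -- degenerate case: both boxes are the same single point
    have hbne : ((WithLp.equiv 2 (Fin d → ℝ)).symm L) ∈ box L R := box_nonempty L R hb
    have hbne' : ((WithLp.equiv 2 (Fin d → ℝ)).symm L') ∈ box L' R' := box_nonempty L' R' hb'
    have hDnn : 0 ≤ D := setDist_nonneg' ⟨_, hbne⟩ ⟨_, hbne'⟩
    have hD0 : D = 0 := le_antisymm (not_lt.1 hDpos) hDnn
    have hM0 : M ≤ 0 := by
      nlinarith [hsep, hD0]
    have hsub : ∀ x ∈ box L R, ∀ y ∈ box L R, x = y :=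
      fun x hx y hy => box_subsingleton L R hb (le_trans (le_max_left _ _) hM0) hx hy
    have hsub' : ∀ x ∈ box L' R', ∀ y ∈ box L' R', x = y :=
      fun x hx y hy => box_subsingleton L' R' hb' (le_trans (le_max_right _ _) hM0) hx hy
    -- pick any cone from F
    have hone : ‖EuclideanSpace.single (⟨0, hd⟩ : Fin d) (1:ℝ)‖ = 1 := by simp
    have hex : ∃ B ∈ F, (EuclideanSpace.single (⟨0, hd⟩ : Fin d) (1:ℝ)) ∈ cone B := by
      apply hcover
      intro h
      rw [h, norm_zero] at hone
      norm_num at hone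
    obtain ⟨B₀, hB₀F, _⟩ := hex
    refine ⟨{B₀}, by simpa using hB₀F, ?_, ?_⟩
    · intro x hx y hy
      have himg : ((fun p : Pt d × Pt d => dist p.1 p.2) '' (box L R ×ˢ box L' R'))
          = {dist x y} := by
        apply Set.eq_singleton_iff_unique_mem.2
        refine ⟨⟨(x, y), Set.mk_mem_prod hx hy, rfl⟩, ?_⟩
        rintro r ⟨⟨a, b⟩, ⟨haa, hbb⟩, rfl⟩
        simp only
        rw [hsub a haa x hx, hsub' b hbb y hy]
      have hDxy : D = dist x y := by
        rw [hD]; unfold setDist; rw [himg, csInf_singleton]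
      have hyx : y - x = 0 := by
        have : dist x y = 0 := by rw [← hDxy, hD0]
        rw [sub_eq_zero]
        exact (dist_eq_zero.1 this).symm
      have : y ∈ coneAt x B₀ := by
        show y - x ∈ cone B₀
        rw [hyx]; exact zero_mem_cone B₀
      exact Set.mem_biUnion (Finset.mem_singleton_self B₀) this
    · intro B₁ hB₁ B₂ hB₂ v₁ hv₁ v₂ hv₂ hv₁0 hv₂0
      rw [Finset.mem_singleton] at hB₁ hB₂
      rw [hB₁] at hv₁
      rw [hB₂] at hv₂
      have := hspan B₀ hB₀F v₁ hv₁ v₂ hv₂ hv₁0 hv₂0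
      linarith
end

section
/- Let G be a graph on vertex set V and u, v ∈ V. Suppose U = {u₁,...,u_{k+1}} and U' = {v₁,...,v_{k+1}} are sets of vertices such that there are k+1 internally vertex-disjoint paths from u to the set U (each path ending at a distinct u_i and pairwise sharing only u), k+1 internally vertex-disjoint paths from v to U' (pairwise sharing only v), the edges u_iv_i are all present in G, and all these paths and edges are internally disjoint from each other except at shared endpoints u_i, v_i. Then there are k+1 internally vertex-disjoint paths from u to v in G. -/
/-- Menger-type gluing: given k+1 internally disjoint paths from u to
distinct vertices u₁,…,u_{k+1}, k+1 internally disjoint paths from v to distinct vertices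
v₁,…,v_{k+1}, the bridging edges uᵢvᵢ all present in G, and the u-fan and v-fan disjoint,
there are k+1 internally vertex-disjoint paths from u to v in G. -/
theorem stmt19 (V : Type) (G : SimpleGraph V) (u v : V) (huv : u ≠ v) (k : ℕ)
    (uu vv : Fin (k + 1) → V)
    (huu : Function.Injective uu) (hvv : Function.Injective vv)
    (Pu : ∀ i, G.Walk u (uu i)) (Pv : ∀ i, G.Walk v (vv i))
    (hPu : ∀ i, (Pu i).IsPath) (hPv : ∀ i, (Pv i).IsPath)
    (hPuDisj : ∀ i j, i ≠ j → ∀ x : V,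
      x ∈ (Pu i).support → x ∈ (Pu j).support → x = u)
    (hPvDisj : ∀ i j, i ≠ j → ∀ x : V,
      x ∈ (Pv i).support → x ∈ (Pv j).support → x = v)
    (hadj : ∀ i, G.Adj (uu i) (vv i))
    (hcross : ∀ i j, ∀ x : V, x ∈ (Pu i).support → x ∉ (Pv j).support) :
    ∃ P : Fin (k + 1) → G.Walk u v,
      (∀ i, (P i).IsPath) ∧
      ∀ i j, i ≠ j → ∀ x : V,
        x ∈ (P i).support → x ∈ (P j).support → x = u ∨ x = v := by
  set P : Fin (k+1) → G.Walk u v :=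
    fun i => (Pu i).append (SimpleGraph.Walk.cons (hadj i) (Pv i).reverse) with hP
  have hsup : ∀ i, (P i).support = (Pu i).support ++ (Pv i).reverse.support := by
    intro i
    simp [hP, SimpleGraph.Walk.support_append, SimpleGraph.Walk.support_cons]
  have hmem : ∀ i x, x ∈ (P i).support ↔ x ∈ (Pu i).support ∨ x ∈ (Pv i).support := by
    intro i x
    rw [hsup i]
    simp [SimpleGraph.Walk.support_reverse]
  refine ⟨P, ?_, ?_⟩
  · intro i
    rw [SimpleGraph.Walk.isPath_def, hsup i]
    refine List.Nodup.append ((hPu i).support_nodup) ?_ ?_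
    · simpa [SimpleGraph.Walk.support_reverse] using (hPv i).reverse.support_nodup
    · intro x hx hx'
      exact hcross i i x hx (by simpa [SimpleGraph.Walk.support_reverse] using hx')
  · intro i j hij x hxi hxj
    rcases (hmem i x).1 hxi with h1 | h1 <;> rcases (hmem j x).1 hxj with h2 | h2
    · exact Or.inl (hPuDisj i j hij x h1 h2)
    · exact absurd h2 (hcross i j x h1)
    · exact absurd h1 (hcross j i x h2)
    · exact Or.inr (hPvDisj i j hij x h1 h2)
end
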